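/- Let n = sm + s − ℓ with ℓ ≥ 2, m ≥ 2, and s ≥ (3/2)ℓ + m. Then C(n − m − ℓ + 1, m − 1) > (ℓ/2)·Σ_{i=1}^{m−1} C(n−1, i−1). -/

import Mathlib

private lemma myMono {b : ℕ} : ∀ {j i : ℕ}, i ≤ j → 2 * j ≤ b →
    Nat.choose b i ≤ Nat.choose b j := by
  intro j
  induction j with
  | zero => intro i hij _; simp [Nat.le_zero.mp hij]
  | succ j ih =>
    intro i hij hj
    rcases Nat.eq_or_lt_of_le hij with h | h
    · rw [h]
    · exact le_trans (ih (by omega) (by omega))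
        (Nat.choose_le_succ_of_lt_half_left (by omega))

private lemma descRatio : ∀ (k K a d c : ℕ), k ≤ K → c + K ≤ a + 1 →
    Nat.descFactorial (a + d) k * c ^ k ≤ Nat.descFactorial a k * (c + d) ^ k := by
  intro k
  induction k with
  | zero => intro K a d c _ _; simp
  | succ k ih =>
    intro K a d c hk h
    have h1 := ih K a d c (by omega) h
    have key : (a + d - k) * c ≤ (a - k) * (c + d) := by
      have h3 : a + d - k = (a - k) + d := by omega
      have h4 : c ≤ a - k := by omega
      rw [h3]
      nlinarith [h4]
    rw [Nat.descFactorial_succ, Nat.descFactorial_succ, pow_succ, pow_succ]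
    calc (a + d - k) * Nat.descFactorial (a + d) k * (c ^ k * c)
        = ((a + d - k) * c) * (Nat.descFactorial (a + d) k * c ^ k) := by ring
      _ ≤ ((a - k) * (c + d)) * (Nat.descFactorial a k * (c + d) ^ k) :=
          Nat.mul_le_mul key h1
      _ = (a - k) * Nat.descFactorial a k * ((c + d) ^ k * (c + d)) := by ring

private lemma chooseRatio (a d c k : ℕ) (h : c + k ≤ a + 1) :
    Nat.choose (a + d) k * c ^ k ≤ Nat.choose a k * (c + d) ^ k := by
  have h1 := descRatio k k a d c le_rfl h
  rw [Nat.descFactorial_eq_factorial_mul_choose, Nat.descFactorial_eq_factorial_mul_choose] at h1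
  have h2 : Nat.factorial k * (Nat.choose (a + d) k * c ^ k) ≤ Nat.factorial k * (Nat.choose a k * (c + d) ^ k) := by
    calc Nat.factorial k * (Nat.choose (a + d) k * c ^ k)
        = Nat.factorial k * Nat.choose (a + d) k * c ^ k := by ring
      _ ≤ Nat.factorial k * Nat.choose a k * (c + d) ^ k := h1
      _ = Nat.factorial k * (Nat.choose a k * (c + d) ^ k) := by ring
  exact Nat.le_of_mul_le_mul_left h2 (Nat.factorial_pos k)

private lemma bern : ∀ (r c D : ℕ), (r + 1) * D ≤ c →
    c ^ r * (c - (r + 1) * D) ≤ (c - D) ^ (r + 1) := by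
  intro r
  induction r with
  | zero => intro c D _; simp
  | succ r ih =>
    intro c D h
    have hD : D ≤ c := le_trans (Nat.le_mul_of_pos_left D (by omega)) h
    have h' : (r + 1) * D ≤ c := le_trans (Nat.mul_le_mul_right D (by omega)) h
    have h1 := ih c D h'
    have key : c * (c - (r + 1 + 1) * D) ≤ (c - (r + 1) * D) * (c - D) := by
      zify [hD, h', h]
      nlinarith [mul_nonneg (mul_nonneg (Int.natCast_nonneg r) (Int.natCast_nonneg D))
        (Int.natCast_nonneg D), Int.natCast_nonneg D, Int.natCast_nonneg c]
    calc c ^ (r + 1) * (c - (r + 1 + 1) * D)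
        = c ^ r * (c * (c - (r + 1 + 1) * D)) := by ring
      _ ≤ c ^ r * ((c - (r + 1) * D) * (c - D)) := mul_le_mul_right key _
      _ = (c ^ r * (c - (r + 1) * D)) * (c - D) := by ring
      _ ≤ (c - D) ^ (r + 1) * (c - D) := mul_le_mul_left h1 _
      _ = (c - D) ^ (r + 1 + 1) := by rw [← pow_succ]

private lemma powRatioEven (c D q : ℕ) (hq : q * D ≤ c) (hc : 0 < c) :
    (c + D) ^ (2 * q) * (c - q * D) ^ 2 ≤ c ^ (2 * q + 2) := by
  rcases q with _ | p
  · norm_num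
  · have hD : D ≤ c := le_trans (Nat.le_mul_of_pos_left D (Nat.succ_pos p)) hq
    have hb : c ^ p * (c - (p + 1) * D) ≤ (c - D) ^ (p + 1) := bern p c D hq
    have hcd : (c + D) * (c - D) ≤ c * c := by
      zify [hD]
      nlinarith [sq_nonneg (D : ℤ)]
    have H : c ^ (2 * p) * ((c + D) ^ (2 * (p + 1)) * (c - (p + 1) * D) ^ 2)
        ≤ c ^ (2 * p) * c ^ (2 * (p + 1) + 2) := by
      calc c ^ (2 * p) * ((c + D) ^ (2 * (p + 1)) * (c - (p + 1) * D) ^ 2)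
          = (c + D) ^ (2 * (p + 1)) * (c ^ p * (c - (p + 1) * D)) ^ 2 := by ring
        _ ≤ (c + D) ^ (2 * (p + 1)) * ((c - D) ^ (p + 1)) ^ 2 :=
            mul_le_mul_right (Nat.pow_le_pow_left hb 2) _
        _ = ((c + D) * (c - D)) ^ (2 * (p + 1)) := by
            rw [mul_pow, ← pow_mul, Nat.mul_comm (p + 1) 2]
        _ ≤ (c * c) ^ (2 * (p + 1)) := Nat.pow_le_pow_left hcd _
        _ = c ^ (2 * p) * c ^ (2 * (p + 1) + 2) := by
            rw [← sq, ← pow_mul, ← pow_add]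
            congr 1
            omega
    exact Nat.le_of_mul_le_mul_left H (pow_pos hc _)

private lemma powRatioOdd (c D q : ℕ) (hq : q * D ≤ c) (hD : D ≤ c) (hc : 0 < c) :
    (c + D) ^ (2 * q + 1) * ((c - q * D) ^ 2 * (c - D)) ≤ c ^ (2 * q + 4) := by
  have h1 := powRatioEven c D q hq hc
  have hcd : (c + D) * (c - D) ≤ c * c := by
    zify [hD]
    nlinarith [sq_nonneg (D : ℤ)]
  calc (c + D) ^ (2 * q + 1) * ((c - q * D) ^ 2 * (c - D))
      = ((c + D) ^ (2 * q) * (c - q * D) ^ 2) * ((c + D) * (c - D)) := by ring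
    _ ≤ c ^ (2 * q + 2) * (c * c) := Nat.mul_le_mul h1 hcd
    _ = c ^ (2 * q + 4) := by ring

set_option maxHeartbeats 2000000 in
private lemma keyEven (t L q n c V W : ℕ)
    (hn2 : 2 * n + 2 * (L + 2) = (3 * (L + 2) + 2 * (2 * q + 3) + t) * (2 * q + 4))
    (hC : n + 2 = c + 2 * (2 * q + 3) + L)
    (hV : c = V + 1)
    (hW : c = W + q * (2 * q + L + 3)) :
    (L + 2) * (2 * q + 2) * ((2 * q + 1) ^ 2 + (c + (2 * q + L + 3))) * c
      < 2 * (V * W ^ 2) := by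
  have hlin2 : 2 * c + (4 * L + 8 * q + 12) = 2 * n + 2 * (L + 2) := by omega
  have heq : 2 * c + (4 * L + 8 * q + 12)
      = (3 * (L + 2) + 2 * (2 * q + 3) + t) * (2 * q + 4) := hlin2.trans hn2
  have hiden : (36 + 32*q + 8*q^2 + 8*L + 6*L*q + 4*t + 2*t*q) + (4 * L + 8 * q + 12)
      = (3 * (L + 2) + 2 * (2 * q + 3) + t) * (2 * q + 4) := by ring
  have h2c : 2 * c = (36 + 32*q + 8*q^2 + 8*L + 6*L*q + 4*t + 2*t*q) := Nat.add_right_cancel (heq.trans hiden.symm)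
  have hw1 : 2 * c = 2 * W + 2 * (q * (2 * q + L + 3)) := by rw [hW]; ring
  have hw2 : (36 + 26*q + 4*q^2 + 8*L + 4*L*q + 4*t + 2*t*q) + 2 * (q * (2 * q + L + 3)) = (36 + 32*q + 8*q^2 + 8*L + 6*L*q + 4*t + 2*t*q) := by ring
  have h2W : 2 * W = (36 + 26*q + 4*q^2 + 8*L + 4*L*q + 4*t + 2*t*q) :=
    Nat.add_right_cancel ((hw1.symm.trans h2c).trans hw2.symm)
  have hv1 : 2 * c = 2 * V + 2 := by omega
  have hv2 : (34 + 32*q + 8*q^2 + 8*L + 6*L*q + 4*t + 2*t*q) + 2 = (36 + 32*q + 8*q^2 + 8*L + 6*L*q + 4*t + 2*t*q) := by ring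
  have h2V : 2 * V = (34 + 32*q + 8*q^2 + 8*L + 6*L*q + 4*t + 2*t*q) :=
    Nat.add_right_cancel ((hv1.symm.trans h2c).trans hv2.symm)
  have HH : (L + 2) * (2 * q + 2) * (2 * (2 * q + 1) ^ 2 + (2 * c) + 2 * (2 * q + L + 3))
      * (2 * c) * 2 < 2 * ((2 * V) * ((2 * W) * (2 * W))) := by
    rw [h2c, h2V, h2W]
    calc (L + 2) * (2 * q + 2) * (2 * (2 * q + 1) ^ 2 + (36 + 32*q + 8*q^2 + 8*L + 6*L*q + 4*t + 2*t*q) + 2 * (2 * q + L + 3))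
        * (36 + 32*q + 8*q^2 + 8*L + 6*L*q + 4*t + 2*t*q) * 2
        < (L + 2) * (2 * q + 2) * (2 * (2 * q + 1) ^ 2 + (36 + 32*q + 8*q^2 + 8*L + 6*L*q + 4*t + 2*t*q) + 2 * (2 * q + L + 3))
          * (36 + 32*q + 8*q^2 + 8*L + 6*L*q + 4*t + 2*t*q) * 2 + (75456 + 173632*q + 163472*q^2 + 80192*q^3 + 21888*q^4 + 3328*q^5 + 256*q^6 + 47872*L + 97024*L*q + 74816*L*q^2 + 26480*L*q^3 + 4032*L*q^4 + 192*L*q^5 + 10080*L^2 + 17664*L^2*q + 10592*L^2*q^2 + 2304*L^2*q^3 + 64*L^2*q^4 + 704*L^3 + 1040*L^3*q + 448*L^3*q^2 + 48*L^3*q^3 + 27392*t + 56256*t*q + 45888*t*q^2 + 18576*t*q^3 + 3776*t*q^4 + 320*t*q^5 + 11712*t*L + 21088*t*L*q + 13888*t*L*q^2 + 3904*t*L*q^3 + 384*t*L*q^4 + 1248*t*L^2 + 1936*t*L^2*q + 976*t*L^2*q^2 + 160*t*L^2*q^3 + 3264*t^2 + 5824*t^2*q + 3888*t^2*q^2 +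 1152*t^2*q^3 + 128*t^2*q^4 + 704*t^2*L + 1088*t^2*L*q + 560*t^2*L*q^2 + 96*t^2*L*q^3 + 128*t^3 + 192*t^3*q + 96*t^3*q^2 + 16*t^3*q^3) := Nat.lt_add_of_pos_right (by positivity)
      _ = 2 * ((34 + 32*q + 8*q^2 + 8*L + 6*L*q + 4*t + 2*t*q) * ((36 + 26*q + 4*q^2 + 8*L + 4*L*q + 4*t + 2*t*q) * (36 + 26*q + 4*q^2 + 8*L + 4*L*q + 4*t + 2*t*q))) := by ring
  have h8 : 8 * ((L + 2) * (2 * q + 2) * ((2 * q + 1) ^ 2 + (c + (2 * q + L + 3))) * c)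
      < 8 * (2 * (V * W ^ 2)) := by
    calc 8 * ((L + 2) * (2 * q + 2) * ((2 * q + 1) ^ 2 + (c + (2 * q + L + 3))) * c)
        = (L + 2) * (2 * q + 2) * (2 * (2 * q + 1) ^ 2 + (2 * c) + 2 * (2 * q + L + 3))
          * (2 * c) * 2 := by ring
      _ < 2 * ((2 * V) * ((2 * W) * (2 * W))) := HH
      _ = 8 * (2 * (V * W ^ 2)) := by ring
  exact lt_of_mul_lt_mul_left h8 (Nat.zero_le 8)

set_option maxHeartbeats 4000000 in
private lemma keyOdd (t L q n c V W Z : ℕ)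
    (hn2 : 2 * n + 2 * (L + 2) = (3 * (L + 2) + 2 * (2 * q + 4) + t) * (2 * q + 5))
    (hC : n + 2 = c + 2 * (2 * q + 4) + L)
    (hV : c = V + 1)
    (hW : c = W + q * (2 * q + L + 4))
    (hZ : c = Z + (2 * q + L + 4)) :
    (L + 2) * (2 * q + 3) * ((2 * q + 2) ^ 2 + (c + (2 * q + L + 4))) * (c * c)
      < 2 * (V * (W ^ 2 * Z)) := by
  have hlin2 : 2 * c + (4 * L + 8 * q + 16) = 2 * n + 2 * (L + 2) := by omega
  have heq : 2 * c + (4 * L + 8 * q + 16)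
      = (3 * (L + 2) + 2 * (2 * q + 4) + t) * (2 * q + 5) := hlin2.trans hn2
  have hiden : (54 + 40*q + 8*q^2 + 11*L + 6*L*q + 5*t + 2*t*q) + (4 * L + 8 * q + 16)
      = (3 * (L + 2) + 2 * (2 * q + 4) + t) * (2 * q + 5) := by ring
  have h2c : 2 * c = (54 + 40*q + 8*q^2 + 11*L + 6*L*q + 5*t + 2*t*q) := Nat.add_right_cancel (heq.trans hiden.symm)
  have hw1 : 2 * c = 2 * W + 2 * (q * (2 * q + L + 4)) := by rw [hW]; ring
  have hw2 : (54 + 32*q + 4*q^2 + 11*L + 4*L*q + 5*t + 2*t*q) + 2 * (q * (2 * q + L + 4)) = (54 + 40*q + 8*q^2 + 11*L + 6*L*q + 5*t + 2*t*q) := by ring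
  have h2W : 2 * W = (54 + 32*q + 4*q^2 + 11*L + 4*L*q + 5*t + 2*t*q) :=
    Nat.add_right_cancel ((hw1.symm.trans h2c).trans hw2.symm)
  have hv1 : 2 * c = 2 * V + 2 := by omega
  have hv2 : (52 + 40*q + 8*q^2 + 11*L + 6*L*q + 5*t + 2*t*q) + 2 = (54 + 40*q + 8*q^2 + 11*L + 6*L*q + 5*t + 2*t*q) := by ring
  have h2V : 2 * V = (52 + 40*q + 8*q^2 + 11*L + 6*L*q + 5*t + 2*t*q) :=
    Nat.add_right_cancel ((hv1.symm.trans h2c).trans hv2.symm)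
  have hz1 : 2 * c = 2 * Z + 2 * (2 * q + L + 4) := by omega
  have hz2 : (46 + 36*q + 8*q^2 + 9*L + 6*L*q + 5*t + 2*t*q) + 2 * (2 * q + L + 4) = (54 + 40*q + 8*q^2 + 11*L + 6*L*q + 5*t + 2*t*q) := by ring
  have h2Z : 2 * Z = (46 + 36*q + 8*q^2 + 9*L + 6*L*q + 5*t + 2*t*q) :=
    Nat.add_right_cancel ((hz1.symm.trans h2c).trans hz2.symm)
  have HH : (L + 2) * (2 * q + 3) * (2 * (2 * q + 2) ^ 2 + (2 * c) + 2 * (2 * q + L + 4))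
      * ((2 * c) * (2 * c)) * 2 < 2 * ((2 * V) * (((2 * W) * (2 * W)) * (2 * Z))) := by
    rw [h2c, h2V, h2W, h2Z]
    calc (L + 2) * (2 * q + 3) * (2 * (2 * q + 2) ^ 2 + (54 + 40*q + 8*q^2 + 11*L + 6*L*q + 5*t + 2*t*q) + 2 * (2 * q + L + 4))
        * ((54 + 40*q + 8*q^2 + 11*L + 6*L*q + 5*t + 2*t*q) * (54 + 40*q + 8*q^2 + 11*L + 6*L*q + 5*t + 2*t*q)) * 2
        < (L + 2) * (2 * q + 3) * (2 * (2 * q + 2) ^ 2 + (54 + 40*q + 8*q^2 + 11*L + 6*L*q + 5*t + 2*t*q) + 2 * (2 * q + L + 4))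
          * ((54 + 40*q + 8*q^2 + 11*L + 6*L*q + 5*t + 2*t*q) * (54 + 40*q + 8*q^2 + 11*L + 6*L*q + 5*t + 2*t*q)) * 2 + (11500704 + 30820608*q + 36034304*q^2 + 23984384*q^3 + 9947392*q^4 + 2642944*q^5 + 443904*q^6 + 44032*q^7 + 2048*q^8 + 8686224*L + 21152896*L*q + 21712768*L*q^2 + 12110592*L*q^3 + 3936704*L*q^4 + 739840*L*q^5 + 73984*L*q^6 + 3072*L*q^7 + 2457080*L^2 + 5400832*L^2*q + 4779296*L^2*q^2 + 2146880*L^2*q^3 + 501472*L^2*q^4 + 54016*L^2*q^5 + 1664*L^2*q^6 + 308572*L^3 + 608224*L^3*q + 454016*L^3*q^2 + 155648*L^3*q^3 + 22592*L^3*q^4 + 768*L^3*q^5 + 14520*L^4 + 25520*L^4*q + 15672*L^4*q^2 + 3840*L^4*q^3 + 288*L^4*q^4 + 4812480*t + 11664832*t*q + 12122176*t*q^2 + 7000576*t*q^3 + 2428992*t*q^4 + 507904*t*q^5 + 59648*t*q^6 + 3072*t*q^7 + 2763400*t*L + 6056160*t*L*q + 5475040*t*L*q^2 + 2607168*t*L*q^3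 + 687872*t*L*q^4 + 95104*t*L*q^5 + 5376*t*L*q^6 + 529000*t*L^2 + 1040720*t*L^2*q + 802048*t*L^2*q^2 + 300960*t*L^2*q^3 + 54400*t*L^2*q^4 + 3712*t*L^2*q^5 + 33770*t*L^3 + 59208*t*L^3*q + 37920*t*L^3*q^2 + 10496*t*L^3*q^3 + 1056*t*L^3*q^4 + 741200*t^2 + 1597760*t^2*q + 1437632*t^2*q^2 + 691328*t^2*q^3 + 187552*t^2*q^4 + 27264*t^2*q^5 + 1664*t^2*q^6 + 286700*t^2*L + 553760*t^2*L*q + 425392*t^2*L*q^2 + 162304*t^2*L*q^3 + 30720*t^2*L*q^4 + 2304*t^2*L*q^5 + 27750*t^2*L^2 + 47600*t^2*L^2*q + 30360*t^2*L^2*q^2 + 8544*t^2*L^2*q^3 + 896*t^2*L^2*q^4 + 50000*t^3 + 94000*t^3*q + 70800*t^3*q^2 + 26720*t^3*q^3 + 5056*t^3*q^4 + 384*t^3*q^5 + 9750*t^3*L + 16200*t^3*L*q + 10080*t^3*L*q^2 + 2784*t^3*L*q^3 + 288*t^3*L*q^4 + 1250*t^4 + 2000*t^4*q + 1200*t^4*q^2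 + 320*t^4*q^3 + 32*t^4*q^4) :=
            Nat.lt_add_of_pos_right (by positivity)
      _ = 2 * ((52 + 40*q + 8*q^2 + 11*L + 6*L*q + 5*t + 2*t*q) * (((54 + 32*q + 4*q^2 + 11*L + 4*L*q + 5*t + 2*t*q) * (54 + 32*q + 4*q^2 + 11*L + 4*L*q + 5*t + 2*t*q)) * (46 + 36*q + 8*q^2 + 9*L + 6*L*q + 5*t + 2*t*q))) := by ring
  have h16 : 16 * ((L + 2) * (2 * q + 3) * ((2 * q + 2) ^ 2 + (c + (2 * q + L + 4))) * (c * c))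
      < 16 * (2 * (V * (W ^ 2 * Z))) := by
    calc 16 * ((L + 2) * (2 * q + 3) * ((2 * q + 2) ^ 2 + (c + (2 * q + L + 4))) * (c * c))
        = (L + 2) * (2 * q + 3) * (2 * (2 * q + 2) ^ 2 + (2 * c) + 2 * (2 * q + L + 4))
          * ((2 * c) * (2 * c)) * 2 := by ring
      _ < 2 * ((2 * V) * (((2 * W) * (2 * W)) * (2 * Z))) := HH
      _ = 16 * (2 * (V * (W ^ 2 * Z))) := by ring
  exact lt_of_mul_lt_mul_left h16 (Nat.zero_le 16)

private lemma tailLemma (L r c V CB CB1 CA1 CA2 : ℕ)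
    (hcsb : CB1 * (r + 1) = CB * (c + (r + L + 3)))
    (hcsa : CA2 * (r + 2) = CA1 * V)
    (hCa : 0 < CA1)
    (hF1 : CB1 * c ^ (r + 1) ≤ CA1 * (c + (r + L + 3)) ^ (r + 1))
    (Hstep : (L + 2) * (r + 2) * ((r + 1) ^ 2 + (c + (r + L + 3))) * (c + (r + L + 3)) ^ r
      < 2 * V * c ^ (r + 1)) :
    (L + 2) * ((r + 1) * CB + CB1) < 2 * CA2 := by
  set X := (L + 2) * (r + 2) * ((r + 1) ^ 2 + (c + (r + L + 3))) with hX
  have hcpos : 0 < c + (r + L + 3) := by omega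
  have t1 : X * (c + (r + L + 3)) ^ (r + 1) < 2 * V * c ^ (r + 1) * (c + (r + L + 3)) := by
    calc X * (c + (r + L + 3)) ^ (r + 1)
        = (X * (c + (r + L + 3)) ^ r) * (c + (r + L + 3)) := by ring
      _ < (2 * V * c ^ (r + 1)) * (c + (r + L + 3)) :=
          mul_lt_mul_of_pos_right Hstep hcpos
      _ = 2 * V * c ^ (r + 1) * (c + (r + L + 3)) := by ring
  have t2 : X * CB1 * c ^ (r + 1)
      < (2 * V * (c + (r + L + 3)) * CA1) * c ^ (r + 1) := by
    calc X * CB1 * c ^ (r + 1) = X * (CB1 * c ^ (r + 1)) := by ring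
      _ ≤ X * (CA1 * (c + (r + L + 3)) ^ (r + 1)) := mul_le_mul_right hF1 X
      _ = (X * (c + (r + L + 3)) ^ (r + 1)) * CA1 := by ring
      _ < (2 * V * c ^ (r + 1) * (c + (r + L + 3))) * CA1 :=
          mul_lt_mul_of_pos_right t1 hCa
      _ = (2 * V * (c + (r + L + 3)) * CA1) * c ^ (r + 1) := by ring
  have t3 : X * CB1 < 2 * V * (c + (r + L + 3)) * CA1 :=
    lt_of_mul_lt_mul_right t2 (Nat.zero_le _)
  have hE1 : ((r + 1) ^ 2 + (c + (r + L + 3))) * CB1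
      = (c + (r + L + 3)) * ((r + 1) * CB + CB1) := by
    calc ((r + 1) ^ 2 + (c + (r + L + 3))) * CB1
        = (r + 1) * (CB1 * (r + 1)) + (c + (r + L + 3)) * CB1 := by ring
      _ = (r + 1) * (CB * (c + (r + L + 3))) + (c + (r + L + 3)) * CB1 := by rw [hcsb]
      _ = (c + (r + L + 3)) * ((r + 1) * CB + CB1) := by ring
  have t4 : ((L + 2) * ((r + 1) * CB + CB1)) * ((c + (r + L + 3)) * (r + 2))
      < (2 * CA2) * ((c + (r + L + 3)) * (r + 2)) := by
    calc ((L + 2) * ((r + 1) * CB + CB1)) * ((c + (r + L + 3)) * (r + 2))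
        = (L + 2) * (r + 2) * ((c + (r + L + 3)) * ((r + 1) * CB + CB1)) := by ring
      _ = (L + 2) * (r + 2) * (((r + 1) ^ 2 + (c + (r + L + 3))) * CB1) := by rw [hE1]
      _ = X * CB1 := by rw [hX]; ring
      _ < 2 * V * (c + (r + L + 3)) * CA1 := t3
      _ = 2 * (c + (r + L + 3)) * (CA1 * V) := by ring
      _ = 2 * (c + (r + L + 3)) * (CA2 * (r + 2)) := by rw [hcsa]
      _ = (2 * CA2) * ((c + (r + L + 3)) * (r + 2)) := by ring
  exact lt_of_mul_lt_mul_right t4 (Nat.zero_le _)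

/-- For `n = sm + s - ℓ`, `ℓ ≥ 2`, `m ≥ 2` and `s ≥ (3/2)ℓ + m`,
`C(n-m-ℓ+1, m-1) > (ℓ/2)·Σ_{i=1}^{m-1} C(n-1,i-1)`
(stated multiplied through by `2`). -/
theorem stmt9 (n s m ℓ : ℕ) (hl : 2 ≤ ℓ) (hm : 2 ≤ m)
    (hs : 3 * ℓ + 2 * m ≤ 2 * s) (hn : n = s * m + s - ℓ) :
    ℓ * ∑ i ∈ Finset.Icc 1 (m - 1), Nat.choose (n - 1) (i - 1)
      < 2 * Nat.choose (n - m - ℓ + 1) (m - 1) := by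
  rcases Nat.lt_or_ge m 3 with h3 | h3
  · -- m = 2
    have hm2 : m = 2 := by omega
    subst hm2
    simp only [show (2:ℕ) - 1 = 1 from rfl, Finset.Icc_self, Finset.sum_singleton,
      show (1:ℕ) - 1 = 0 from rfl, Nat.choose_zero_right, Nat.choose_one_right, mul_one]
    omega
  · obtain ⟨r, rfl⟩ : ∃ r, m = r + 3 := ⟨m - 3, by omega⟩
    obtain ⟨L, rfl⟩ : ∃ L, ℓ = L + 2 := ⟨ℓ - 2, by omega⟩
    obtain ⟨t, ht⟩ : ∃ t, 2 * s = 3 * (L + 2) + 2 * (r + 3) + t :=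
      ⟨2 * s - (3 * (L + 2) + 2 * (r + 3)), by omega⟩
    have hn' : n + (L + 2) = s * (r + 4) := by
      have h1 : s * (r + 4) = s * (r + 3) + s := by ring
      omega
    have hn2 : 2 * n + 2 * (L + 2) = (3 * (L + 2) + 2 * (r + 3) + t) * (r + 4) := by
      have h1 : (3 * (L + 2) + 2 * (r + 3) + t) * (r + 4) = (2 * s) * (r + 4) := by
        rw [← ht]
      have h2 : (2 * s) * (r + 4) = 2 * (s * (r + 4)) := by ring
      omega
    have hlin : 5 * (L + 2) + 4 * (r + 3) ≤ n := by nlinarith [hn2]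
    obtain ⟨c, hC⟩ : ∃ c, n + 2 = c + 2 * (r + 3) + L := ⟨n + 2 - (2 * (r + 3) + L), by omega⟩
    have hc1 : 1 ≤ c := by omega
    obtain ⟨V, hV⟩ : ∃ V, c = V + 1 := ⟨c - 1, by omega⟩
    have hc0 : 0 < c := by omega
    -- rewrite the goal
    rw [show n - 1 = c + 2 * r + L + 3 from by omega,
        show n - (r + 3) - (L + 2) + 1 = c + r from by omega,
        show r + 3 - 1 = r + 2 from by omega]
    have hsum : ∑ i ∈ Finset.Icc 1 (r + 2), Nat.choose (c + 2 * r + L + 3) (i - 1)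
        = ∑ i ∈ Finset.range (r + 2), Nat.choose (c + 2 * r + L + 3) i := by
      rw [show Finset.Icc 1 (r + 2) = Finset.Ico 1 (r + 3) from (Finset.Ico_add_one_right_eq_Icc ..).symm,
        Finset.sum_Ico_eq_sum_range]
      simp
    rw [hsum]
    -- sum bound
    have hSb : ∑ i ∈ Finset.range (r + 2), Nat.choose (c + 2 * r + L + 3) i
        ≤ (r + 1) * Nat.choose (c + 2 * r + L + 3) r + Nat.choose (c + 2 * r + L + 3) (r + 1) := by
      rw [Finset.sum_range_succ]
      have h1 : ∑ i ∈ Finset.range (r + 1), Nat.choose (c + 2 * r + L + 3) i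
          ≤ (r + 1) * Nat.choose (c + 2 * r + L + 3) r := by
        have h2 := Finset.sum_le_card_nsmul (Finset.range (r + 1))
          (fun i => Nat.choose (c + 2 * r + L + 3) i) (Nat.choose (c + 2 * r + L + 3) r)
          (fun i hi => myMono (Nat.lt_succ_iff.mp (Finset.mem_range.mp hi)) (by omega))
        simpa [Finset.card_range] using h2
      exact Nat.add_le_add_right h1 _
    -- common ingredients
    have hcsb : Nat.choose (c + 2 * r + L + 3) (r + 1) * (r + 1)
        = Nat.choose (c + 2 * r + L + 3) r * (c + (r + L + 3)) := by
      have h1 := Nat.choose_succ_right_eq (c + 2 * r + L + 3) r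
      rw [show c + 2 * r + L + 3 - r = c + (r + L + 3) from by omega] at h1
      exact h1
    have hcsa : Nat.choose (c + r) (r + 2) * (r + 2) = Nat.choose (c + r) (r + 1) * V := by
      have h1 := Nat.choose_succ_right_eq (c + r) (r + 1)
      rw [show c + r - (r + 1) = V from by omega] at h1
      exact h1
    have hCa : 0 < Nat.choose (c + r) (r + 1) := Nat.choose_pos (by omega)
    have hF1 : Nat.choose (c + 2 * r + L + 3) (r + 1) * c ^ (r + 1)
        ≤ Nat.choose (c + r) (r + 1) * (c + (r + L + 3)) ^ (r + 1) := by
      have h1 := chooseRatio (c + r) (r + L + 3) c (r + 1) (by omega)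
      rwa [show c + r + (r + L + 3) = c + 2 * r + L + 3 from by omega] at h1
    -- the parity-split step
    have Hstep : (L + 2) * (r + 2) * ((r + 1) ^ 2 + (c + (r + L + 3)))
        * (c + (r + L + 3)) ^ r < 2 * V * c ^ (r + 1) := by
      rcases Nat.even_or_odd r with he | ho
      · obtain ⟨q, hq0⟩ := he
        obtain ⟨q, rfl⟩ : ∃ q', r = 2 * q' := ⟨q, by omega⟩
        have hqD : q * (2 * q + L + 3) ≤ c := by
          have h2c' : 2 * c + (4 * L + 8 * q + 12)
              = (3 * (L + 2) + 2 * (2 * q + 3) + t) * (2 * q + 4) := by omega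
          have h5 : (2 * (q * (2 * q + L + 3)) + (36 + 26*q + 4*q^2 + 8*L + 4*L*q + 4*t + 2*t*q)) + (4 * L + 8 * q + 12)
              = (3 * (L + 2) + 2 * (2 * q + 3) + t) * (2 * q + 4) := by ring
          have h6 : 2 * (q * (2 * q + L + 3)) ≤ 2 * c := by omega
          exact Nat.le_of_mul_le_mul_left h6 (by norm_num)
        obtain ⟨W, hW⟩ : ∃ W, c = W + q * (2 * q + L + 3) := ⟨c - q * (2 * q + L + 3), by omega⟩
        have key := keyEven t L q n c V W hn2 (by omega) hV hW
        have hpow := powRatioEven c (2 * q + L + 3) q hqD hc0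
        rw [show c - q * (2 * q + L + 3) = W from by omega] at hpow
        have s1 : ((L + 2) * (2 * q + 2) * ((2 * q + 1) ^ 2 + (c + (2 * q + L + 3)))
            * (c + (2 * q + L + 3)) ^ (2 * q)) * W ^ 2
            < (2 * V * c ^ (2 * q + 1)) * W ^ 2 := by
          calc ((L + 2) * (2 * q + 2) * ((2 * q + 1) ^ 2 + (c + (2 * q + L + 3)))
              * (c + (2 * q + L + 3)) ^ (2 * q)) * W ^ 2
              = ((L + 2) * (2 * q + 2) * ((2 * q + 1) ^ 2 + (c + (2 * q + L + 3))))
                * ((c + (2 * q + L + 3)) ^ (2 * q) * W ^ 2) := by ring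
            _ ≤ ((L + 2) * (2 * q + 2) * ((2 * q + 1) ^ 2 + (c + (2 * q + L + 3))))
                * c ^ (2 * q + 2) := mul_le_mul_right hpow _
            _ = ((L + 2) * (2 * q + 2) * ((2 * q + 1) ^ 2 + (c + (2 * q + L + 3))) * c)
                * c ^ (2 * q + 1) := by ring
            _ < (2 * (V * W ^ 2)) * c ^ (2 * q + 1) :=
                mul_lt_mul_of_pos_right key (pow_pos hc0 _)
            _ = (2 * V * c ^ (2 * q + 1)) * W ^ 2 := by ring
        exact lt_of_mul_lt_mul_right s1 (Nat.zero_le (W ^ 2))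
      · obtain ⟨q, rfl⟩ : ∃ q', r = 2 * q' + 1 := ho
        have hqD : q * (2 * q + L + 4) ≤ c := by
          have h2c' : 2 * c + (4 * L + 8 * q + 16)
              = (3 * (L + 2) + 2 * (2 * q + 4) + t) * (2 * q + 5) := by
            have hl2 : (3 * (L + 2) + 2 * (2 * q + 1 + 3) + t) * (2 * q + 1 + 4)
                = (3 * (L + 2) + 2 * (2 * q + 4) + t) * (2 * q + 5) := by ring
            omega
          have h6 : 2 * (q * (2 * q + L + 4)) ≤ 2 * c := by
            have h5 : (2 * (q * (2 * q + L + 4)) + (54 + 32*q + 4*q^2 + 11*L + 4*L*q + 5*t + 2*t*q)) + (4 * L + 8 * q + 16)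
                = (3 * (L + 2) + 2 * (2 * q + 4) + t) * (2 * q + 5) := by ring
            omega
          exact Nat.le_of_mul_le_mul_left h6 (by norm_num)
        have hDc : 2 * q + L + 4 ≤ c := by omega
        obtain ⟨W, hW⟩ : ∃ W, c = W + q * (2 * q + L + 4) := ⟨c - q * (2 * q + L + 4), by omega⟩
        obtain ⟨Z, hZ⟩ : ∃ Z, c = Z + (2 * q + L + 4) := ⟨c - (2 * q + L + 4), by omega⟩
        have key := keyOdd t L q n c V W Z
          (hn2.trans (by ring : (3 * (L + 2) + 2 * (2 * q + 1 + 3) + t) * (2 * q + 1 + 4)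
            = (3 * (L + 2) + 2 * (2 * q + 4) + t) * (2 * q + 5)))
          (by omega) hV hW hZ
        have hpow := powRatioOdd c (2 * q + L + 4) q hqD hDc hc0
        rw [show c - q * (2 * q + L + 4) = W from by omega,
            show c - (2 * q + L + 4) = Z from by omega] at hpow
        have s1 : ((L + 2) * (2 * q + 3) * ((2 * q + 2) ^ 2 + (c + (2 * q + L + 4)))
            * (c + (2 * q + L + 4)) ^ (2 * q + 1)) * (W ^ 2 * Z)
            < (2 * V * c ^ (2 * q + 2)) * (W ^ 2 * Z) := by
          calc ((L + 2) * (2 * q + 3) * ((2 * q + 2) ^ 2 + (c + (2 * q + L + 4)))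
              * (c + (2 * q + L + 4)) ^ (2 * q + 1)) * (W ^ 2 * Z)
              = ((L + 2) * (2 * q + 3) * ((2 * q + 2) ^ 2 + (c + (2 * q + L + 4))))
                * ((c + (2 * q + L + 4)) ^ (2 * q + 1) * (W ^ 2 * Z)) := by ring
            _ ≤ ((L + 2) * (2 * q + 3) * ((2 * q + 2) ^ 2 + (c + (2 * q + L + 4))))
                * c ^ (2 * q + 4) := mul_le_mul_right hpow _
            _ = ((L + 2) * (2 * q + 3) * ((2 * q + 2) ^ 2 + (c + (2 * q + L + 4))) * (c * c))
                * c ^ (2 * q + 2) := by ring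
            _ < (2 * (V * (W ^ 2 * Z))) * c ^ (2 * q + 2) :=
                mul_lt_mul_of_pos_right key (pow_pos hc0 _)
            _ = (2 * V * c ^ (2 * q + 2)) * (W ^ 2 * Z) := by ring
        have s2 := lt_of_mul_lt_mul_right s1 (Nat.zero_le (W ^ 2 * Z))
        calc (L + 2) * (2 * q + 1 + 2) * ((2 * q + 1 + 1) ^ 2 + (c + (2 * q + 1 + L + 3)))
            * (c + (2 * q + 1 + L + 3)) ^ (2 * q + 1)
            = (L + 2) * (2 * q + 3) * ((2 * q + 2) ^ 2 + (c + (2 * q + L + 4)))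
              * (c + (2 * q + L + 4)) ^ (2 * q + 1) := by ring
          _ < 2 * V * c ^ (2 * q + 2) := s2
          _ = 2 * V * c ^ (2 * q + 1 + 1) := by ring
    have hT := tailLemma L r c V (Nat.choose (c + 2 * r + L + 3) r)
      (Nat.choose (c + 2 * r + L + 3) (r + 1)) (Nat.choose (c + r) (r + 1))
      (Nat.choose (c + r) (r + 2)) hcsb hcsa hCa hF1 Hstep
    calc (L + 2) * ∑ i ∈ Finset.range (r + 2), Nat.choose (c + 2 * r + L + 3) i
        ≤ (L + 2) * ((r + 1) * Nat.choose (c + 2 * r + L + 3) r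
            + Nat.choose (c + 2 * r + L + 3) (r + 1)) := mul_le_mul_right hSb _
      _ < 2 * Nat.choose (c + r) (r + 2) := hT
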